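/- Let k ≥ 1 and let G be the bi-directional ring of size n ≥ 3 with a marked k-tuple ḡ of pairwise distinct vertices (k ≤ n). For an unmarked vertex v, let r(v) and l(v) be the first marked vertices in the sequences v+1, v+2, … and v−1, v−2, …, respectively (arithmetic in ZMod n). Then for every d ≥ 1 and every unmarked vertex v, μ_d(v) = { List.destutter (· ≠ ·) [μ_{d−1}(v), μ_{d−1}(r(v))], List.destutter (· ≠ ·) [μ_{d−1}(v), μ_{d−1}(l(v))] }; any two unmarked vertices u, v with r(u) = r(v) and l(u) = l(v) satisfy μ_d(u) = μ_d(v) for all d ≥ 0; and for every d the number of ∼_d-equivalence classes is at most 2k. -/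

import Mathlib

/-! Markings of topologies with a marked k-tuple, following the paper's
`d`-contraction construction. -/

noncomputable def dst {α : Type} (l : List α) : List α :=
  @List.destutter α (· ≠ ·) (fun _ _ => Classical.dec _) l

/-- A topology: a finite nonempty directed graph with no self-loops. -/
structure Topo where
  V : Type
  fintypeV : Fintype V
  decEqV : DecidableEq V
  nonemptyV : Nonempty V
  E : V → V → Prop
  no_self_loops : ∀ v, ¬ E v v

attribute [instance] Topo.fintypeV Topo.decEqV Topo.nonemptyV

/-- `Mark k d`: the type of `d`-th markings (independent of the topology). -/
def Mark (k : ℕ) : ℕ → Type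
  | 0 => Finset (Fin k)
  | d + 1 => Set (List (Mark k d))

def Mark.toSet {k d : ℕ} (m : Mark k (d + 1)) : Set (List (Mark k d)) := m

/-- The labeling `Λ`: `Λ (g i) = {i}` and `Λ v = ∅` for unmarked `v`
(for injective `g`). -/
def lab {k : ℕ} (G : Topo) (g : Fin k → G.V) (v : G.V) : Finset (Fin k) :=
  Finset.univ.filter fun i => g i = v

/-- `InX G g v π`: `π` is a directed path starting at `v`, ending at a marked
vertex, with all non-final vertices unmarked.  (The set `X(v)` of the paper.) -/
def InX {k : ℕ} (G : Topo) (g : Fin k → G.V) (v : G.V) (π : List G.V) : Prop :=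
  π ≠ [] ∧ π.head? = some v ∧ List.Chain' G.E π ∧
    (∀ u ∈ π.dropLast, u ∉ Set.range g) ∧
    ∃ w ∈ Set.range g, π.getLast? = some w

/-- The `d`-th marking `μ_d`. -/
noncomputable def mu {k : ℕ} (G : Topo) (g : Fin k → G.V) : (d : ℕ) → G.V → Mark k d
  | 0, v => lab G g v
  | d + 1, v => { s : List (Mark k d) | ∃ π : List G.V, InX G g v π ∧ s = dst (π.map (mu G g d)) }

/-- The bi-directional ring of size `n ≥ 3`: vertices `ZMod n`, edges
`(i, i+1)` and `(i, i-1)`. -/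
def biRing (n : ℕ) (hn : 3 ≤ n) : Topo :=
  haveI : NeZero n := ⟨by omega⟩
  haveI : Fact (1 < n) := ⟨by omega⟩
  { V := ZMod n
    fintypeV := inferInstance
    decEqV := inferInstance
    nonemptyV := inferInstance
    E := fun i j => j = i + 1 ∨ j = i - 1
    no_self_loops := by
      intro v h
      rcases h with h | h
      · exact one_ne_zero (left_eq_add.mp h)
      · rw [sub_eq_add_neg] at h
        exact one_ne_zero (neg_eq_zero.mp (left_eq_add.mp h)) }

/-- `firstMarkedFwd g v w`: `w` is the first marked vertex in the sequence
`v+1, v+2, …`. -/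
def firstMarkedFwd {k : ℕ} (n : ℕ) (g : Fin k → ZMod n) (v w : ZMod n) : Prop :=
  ∃ j : ℕ, 1 ≤ j ∧ w = v + (j : ZMod n) ∧ w ∈ Set.range g ∧
    ∀ i : ℕ, 1 ≤ i → i < j → (v + (i : ZMod n)) ∉ Set.range g

/-- `firstMarkedBwd g v w`: `w` is the first marked vertex in the sequence
`v-1, v-2, …`. -/
def firstMarkedBwd {k : ℕ} (n : ℕ) (g : Fin k → ZMod n) (v w : ZMod n) : Prop :=
  ∃ j : ℕ, 1 ≤ j ∧ w = v - (j : ZMod n) ∧ w ∈ Set.range g ∧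
    ∀ i : ℕ, 1 ≤ i → i < j → (v - (i : ZMod n)) ∉ Set.range g


/-! ### Auxiliary lemmas -/

lemma dst_cons_cons {α : Type} (a : α) (t : List α) : dst (a :: a :: t) = dst (a :: t) := by
  unfold dst
  rw [List.destutter_cons', List.destutter_cons', List.destutter'_cons_neg]
  simp

lemma dst_const_append {α : Type} {a b : α} :
    ∀ (t : List α), t ≠ [] → (∀ x ∈ t, x = a) → dst (t ++ [b]) = dst [a, b] := by
  intro t
  induction t with
  | nil => intro h; exact absurd rfl h
  | cons x s ih =>
    intro _ hx
    have hxa : a = x := (hx x (by simp)).symm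
    subst hxa
    cases s with
    | nil => rfl
    | cons y s' =>
      have hya : y = a := hx y (by simp)
      have h1 := ih (by simp) (fun z hz => hx z (by simp [hz]))
      rw [hya] at h1
      calc dst ((a :: y :: s') ++ [b]) = dst (a :: a :: (s' ++ [b])) := by rw [hya]; simp
        _ = dst (a :: (s' ++ [b])) := dst_cons_cons a _
        _ = dst [a, b] := by simpa using h1

section Ring

variable {k n : ℕ} {g : Fin k → ZMod n} {r l : ZMod n → ZMod n}

lemma fwd_unique {v w w' : ZMod n} (h : firstMarkedFwd n g v w)
    (h' : firstMarkedFwd n g v w') : w = w' := by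
  obtain ⟨j, hj1, hw, hm, hmin⟩ := h
  obtain ⟨j', hj1', hw', hm', hmin'⟩ := h'
  rcases lt_trichotomy j j' with h | h | h
  · exact absurd (hw ▸ hm) (hmin' j hj1 h)
  · rw [hw, hw', h]
  · exact absurd (hw' ▸ hm') (hmin j' hj1' h)

lemma bwd_unique {v w w' : ZMod n} (h : firstMarkedBwd n g v w)
    (h' : firstMarkedBwd n g v w') : w = w' := by
  obtain ⟨j, hj1, hw, hm, hmin⟩ := h
  obtain ⟨j', hj1', hw', hm', hmin'⟩ := h'
  rcases lt_trichotomy j j' with h | h | h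
  · exact absurd (hw ▸ hm) (hmin' j hj1 h)
  · rw [hw, hw', h]
  · exact absurd (hw' ▸ hm') (hmin j' hj1' h)

variable (hr : ∀ v : ZMod n, v ∉ Set.range g → firstMarkedFwd n g v (r v))
variable (hl : ∀ v : ZMod n, v ∉ Set.range g → firstMarkedBwd n g v (l v))

include hr in
lemma runR {a : ZMod n} (ha : a ∉ Set.range g) (ha1 : a + 1 ∉ Set.range g) :
    r (a + 1) = r a := by
  obtain ⟨j, hj1, hw, hm, hmin⟩ := hr a ha
  have hj2 : 2 ≤ j := by
    by_contra hcon
    have hj : j = 1 := by omega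
    subst hj
    rw [hw] at hm
    simp only [Nat.cast_one] at hm
    exact ha1 hm
  refine fwd_unique (hr (a + 1) ha1) ⟨j - 1, by omega, ?_, hw ▸ hm, ?_⟩
  · rw [hw, Nat.cast_sub (by omega : 1 ≤ j)]
    push_cast
    ring
  · intro i hi1 hij
    have := hmin (i + 1) (by omega) (by omega)
    have he : a + 1 + (i : ZMod n) = a + ((i + 1 : ℕ) : ZMod n) := by push_cast; ring
    rw [he]
    exact this

include hl in
lemma runL {a : ZMod n} (ha : a ∉ Set.range g) (ha1 : a + 1 ∉ Set.range g) :
    l (a + 1) = l a := by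
  obtain ⟨j, hj1, hw, hm, hmin⟩ := hl a ha
  refine bwd_unique (hl (a + 1) ha1) ⟨j + 1, by omega, ?_, hw ▸ hm, ?_⟩
  · rw [hw]
    push_cast
    ring
  · intro i hi1 hij
    rcases Nat.lt_or_ge i 2 with h2 | h2
    · have hi : i = 1 := by omega
      subst hi
      simpa using ha
    · have := hmin (i - 1) (by omega) (by omega)
      have he : a + 1 - (i : ZMod n) = a - ((i - 1 : ℕ) : ZMod n) := by
        rw [Nat.cast_sub (by omega : 1 ≤ i)]
        push_cast
        ring
      rw [he]
      exact this

include hr hl in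
lemma gapF {v : ZMod n} (hv : v ∉ Set.range g) {j : ℕ}
    (hmin : ∀ i : ℕ, 1 ≤ i → i < j → v + (i : ZMod n) ∉ Set.range g) :
    ∀ i : ℕ, i < j → (v + (i : ZMod n) ∉ Set.range g) ∧
      r (v + (i : ZMod n)) = r v ∧ l (v + (i : ZMod n)) = l v := by
  intro i
  induction i with
  | zero =>
    intro _
    refine ⟨by simpa using hv, by norm_num, by norm_num⟩
  | succ i ih =>
    intro hij
    obtain ⟨h1, hri, hli⟩ := ih (by omega)
    have h2 : v + ((i + 1 : ℕ) : ZMod n) ∉ Set.range g := hmin (i + 1) (by omega) hij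
    have he : v + ((i + 1 : ℕ) : ZMod n) = (v + (i : ZMod n)) + 1 := by push_cast; ring
    rw [he] at h2 ⊢
    exact ⟨h2, by rw [runR hr h1 h2, hri], by rw [runL hl h1 h2, hli]⟩

include hr hl in
lemma gapB {v : ZMod n} (hv : v ∉ Set.range g) {j : ℕ}
    (hmin : ∀ i : ℕ, 1 ≤ i → i < j → v - (i : ZMod n) ∉ Set.range g) :
    ∀ i : ℕ, i < j → (v - (i : ZMod n) ∉ Set.range g) ∧
      r (v - (i : ZMod n)) = r v ∧ l (v - (i : ZMod n)) = l v := by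
  intro i
  induction i with
  | zero =>
    intro _
    refine ⟨by simpa using hv, by norm_num, by norm_num⟩
  | succ i ih =>
    intro hij
    obtain ⟨h1, hri, hli⟩ := ih (by omega)
    have h2 : v - ((i + 1 : ℕ) : ZMod n) ∉ Set.range g := hmin (i + 1) (by omega) hij
    have he : (v - ((i + 1 : ℕ) : ZMod n)) + 1 = v - (i : ZMod n) := by push_cast; ring
    refine ⟨h2, ?_, ?_⟩
    · have := runR hr h2 (he ▸ h1)
      rw [he] at this
      rw [← this, hri]
    · have := runL hl h2 (he ▸ h1)
      rw [he] at this
      rw [← this, hli]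

include hr hl in
lemma r_det_l {u v : ZMod n} (hu : u ∉ Set.range g) (hv : v ∉ Set.range g)
    (hruv : r u = r v) : l u = l v := by
  obtain ⟨j, hj1, hwj, _, hminj⟩ := hr u hu
  obtain ⟨m, hm1, hwm, _, hminm⟩ := hr v hv
  have heq : u + (j : ZMod n) = v + (m : ZMod n) := by rw [← hwj, ← hwm, hruv]
  rcases le_total m j with h | h
  · have hveq : v = u + ((j - m : ℕ) : ZMod n) := by
      rw [Nat.cast_sub h]
      linear_combination -heq
    have := (gapF hr hl hu hminj (j - m) (by omega)).2.2
    rw [← hveq] at this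
    exact this.symm
  · have hueq : u = v + ((m - j : ℕ) : ZMod n) := by
      rw [Nat.cast_sub h]
      linear_combination heq
    have := (gapF hr hl hv hminm (m - j) (by omega)).2.2
    rw [← hueq] at this
    exact this

include hr hl in
lemma key (hn : 3 ≤ n) :
    ∀ (π : List (ZMod n)) (v : ZMod n), v ∉ Set.range g → InX (biRing n hn) g v π →
      (∀ u ∈ π.dropLast, u ∉ Set.range g ∧ r u = r v ∧ l u = l v) ∧
      (π.getLast? = some (r v) ∨ π.getLast? = some (l v)) := by
  intro π
  induction π with
  | nil => intro v _ hx; exact absurd rfl hx.1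
  | cons x rest ih =>
    intro v hv hx
    obtain ⟨-, hhead, hchain, hdrop, w, hwg, hlast⟩ := hx
    have hxv : v = x := by symm; exact Option.some.inj hhead
    subst hxv
    cases rest with
    | nil =>
      replace hlast : v = w := Option.some.inj hlast
      exact absurd (hlast ▸ hwg) hv
    | cons y rest' =>
      replace hchain := List.isChain_cons_cons.mp hchain
      obtain ⟨hE, hchain'⟩ := hchain
      have hE' : y = v + 1 ∨ y = v - 1 := hE
      by_cases hy : y ∈ Set.range g
      · -- the path ends immediately at y
        cases rest' with
        | cons z rest'' =>
          exact absurd hy (hdrop y (List.Mem.tail _ (List.Mem.head _)))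
        | nil =>
          have hdl : (v :: [y]).dropLast = [v] := rfl
          constructor
          · intro u hu
            rw [hdl] at hu
            obtain rfl : u = v := by simpa using hu
            exact ⟨hv, rfl, rfl⟩
          · have hgl : (v :: [y]).getLast? = some y := rfl
            rcases hE' with h1 | h1
            · left
              obtain ⟨j, hj1, hw, hm, hmin⟩ := hr v hv
              have hj : j = 1 := by
                by_contra hne
                apply hmin 1 le_rfl (by omega)
                rw [Nat.cast_one, ← h1]
                exact hy
              rw [hgl, hw, hj, Nat.cast_one, ← h1]
            · right
              obtain ⟨j, hj1, hw, hm, hmin⟩ := hl v hv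
              have hj : j = 1 := by
                by_contra hne
                apply hmin 1 le_rfl (by omega)
                rw [Nat.cast_one, ← h1]
                exact hy
              rw [hgl, hw, hj, Nat.cast_one, ← h1]
      · -- y is unmarked: recurse
        have hry : r y = r v := by
          rcases hE' with h1 | h1
          · rw [h1]; exact runR hr hv (h1 ▸ hy)
          · have h2 : y + 1 = v := by rw [h1]; ring
            have := runR hr hy (h2 ▸ hv)
            rw [h2] at this
            exact this.symm
        have hly : l y = l v := by
          rcases hE' with h1 | h1
          · rw [h1]; exact runL hl hv (h1 ▸ hy)
          · have h2 : y + 1 = v := by rw [h1]; ring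
            have := runL hl hy (h2 ▸ hv)
            rw [h2] at this
            exact this.symm
        have hdl : (v :: y :: rest').dropLast = v :: (y :: rest').dropLast := rfl
        have hInX : InX (biRing n hn) g y (y :: rest') := by
          refine ⟨List.cons_ne_nil _ _, rfl, hchain', ?_, w, hwg, ?_⟩
          · intro u hu
            exact hdrop u (by erw [hdl]; exact List.mem_cons_of_mem v hu)
          · exact hlast
        obtain ⟨hdropIH, hlastIH⟩ := ih y hy hInX
        constructor
        · intro u hu
          rw [hdl] at hu
          rcases List.mem_cons.mp hu with huv | hu'
          · subst huv; exact ⟨hv, rfl, rfl⟩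
          · obtain ⟨h1, h2, h3⟩ := hdropIH u hu'
            exact ⟨h1, by rw [h2, hry], by rw [h3, hly]⟩
        · have hgl : (v :: y :: rest').getLast? = (y :: rest').getLast? := rfl
          rw [hgl, ← hry, ← hly]
          exact hlastIH

lemma mem_mu_succ (hn : 3 ≤ n) (d : ℕ) (p : ℕ → ZMod n) (j : ℕ) (hj : 1 ≤ j)
    (v w : ZMod n) (hp0 : p 0 = v) (hpj : p j = w)
    (hstep : ∀ i < j, (biRing n hn).E (p i) (p (i + 1)))
    (hunm : ∀ i < j, p i ∉ Set.range g)
    (hmark : w ∈ Set.range g)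
    (hconst : ∀ i < j, mu (biRing n hn) g d (p i) = mu (biRing n hn) g d v) :
    dst [mu (biRing n hn) g d v, mu (biRing n hn) g d w]
      ∈ Mark.toSet (mu (biRing n hn) g (d + 1) v) := by
  refine ⟨(List.range (j + 1)).map p, ⟨?_, ?_, ?_, ?_, w, hmark, ?_⟩, ?_⟩
  · intro h
    exact absurd (List.map_eq_nil_iff.mp h) (by simp)
  · erw [List.head?_map, List.range_succ_eq_map]
    simp [hp0]
    exact congrArg some hp0
  · refine (List.isChain_map _).mpr ((List.isChain_range_succ _ _).mpr ?_)
    exact hstep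
  · erw [← List.map_dropLast, List.range_succ, List.dropLast_concat]
    intro u hu
    obtain ⟨i, hi, rfl⟩ := List.mem_map.mp hu
    exact hunm i (List.mem_range.mp hi)
  · erw [List.range_succ, List.map_append]
    simp [hpj]
    exact congrArg some hpj
  · erw [List.map_map, List.range_succ, List.map_append]
    have := dst_const_append (a := mu (biRing n hn) g d v)
      (b := mu (biRing n hn) g d w)
      ((List.range j).map (mu (biRing n hn) g d ∘ p))
      (by simp; omega)
      (by
        intro x hx
        obtain ⟨i, hi, rfl⟩ := List.mem_map.mp hx
        exact hconst i (List.mem_range.mp hi))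
    simp only [List.map_cons, List.map_nil, Function.comp_apply, hpj] at this ⊢
    subst hpj
    exact this.symm

include hr hl in
lemma stmt1_of_stmt2 (hn : 3 ≤ n) (d : ℕ)
    (H2 : ∀ u v : ZMod n, u ∉ Set.range g → v ∉ Set.range g → r u = r v → l u = l v →
      mu (biRing n hn) g d u = mu (biRing n hn) g d v)
    (v : ZMod n) (hv : v ∉ Set.range g) :
    Mark.toSet (mu (biRing n hn) g (d + 1) v) =
      {dst [mu (biRing n hn) g d v, mu (biRing n hn) g d (r v)],
       dst [mu (biRing n hn) g d v, mu (biRing n hn) g d (l v)]} := by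
  have hrv : r v ∈ Set.range g := by
    obtain ⟨j, _, _, hm, _⟩ := hr v hv
    exact hm
  have hlv : l v ∈ Set.range g := by
    obtain ⟨j, _, _, hm, _⟩ := hl v hv
    exact hm
  ext s
  simp only [Set.mem_insert_iff, Set.mem_singleton_iff]
  constructor
  · rintro ⟨π, hπ, rfl⟩
    obtain ⟨hdrop, hlastor⟩ := key hr hl hn π v hv hπ
    obtain hlast | hlast := hlastor
    · left
      have hsplit := List.dropLast_append_getLast? _ hlast
      have hne : π.dropLast ≠ [] := by
        intro hnil
        erw [hnil] at hsplit
        have hvr : r v = v := by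
          have := hπ.2.1
          rw [← hsplit] at this
          exact Option.some.inj this
        exact hv (hvr ▸ hrv)
      erw [← hsplit, List.map_append]
      exact dst_const_append (π.dropLast.map (mu (biRing n hn) g d))
        (by
          intro hmapnil
          have hlen : π.dropLast.length = 0 := by
            simpa using congrArg List.length hmapnil
          exact hne (List.length_eq_zero_iff.mp hlen))
        (by
          rintro x hx
          obtain ⟨u, hu, rfl⟩ := List.mem_map.mp hx
          obtain ⟨h1, h2, h3⟩ := hdrop u hu
          exact H2 u v h1 hv h2 h3)
    · right
      have hsplit := List.dropLast_append_getLast? _ hlast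
      have hne : π.dropLast ≠ [] := by
        intro hnil
        erw [hnil] at hsplit
        have hvl : l v = v := by
          have := hπ.2.1
          rw [← hsplit] at this
          exact Option.some.inj this
        exact hv (hvl ▸ hlv)
      erw [← hsplit, List.map_append]
      exact dst_const_append (π.dropLast.map (mu (biRing n hn) g d))
        (by
          intro hmapnil
          have hlen : π.dropLast.length = 0 := by
            simpa using congrArg List.length hmapnil
          exact hne (List.length_eq_zero_iff.mp hlen))
        (by
          rintro x hx
          obtain ⟨u, hu, rfl⟩ := List.mem_map.mp hx
          obtain ⟨h1, h2, h3⟩ := hdrop u hu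
          exact H2 u v h1 hv h2 h3)
  · intro hs
    obtain ⟨j, hj1, hw, hm, hmin⟩ := hr v hv
    obtain ⟨j', hj1', hw', hm', hmin'⟩ := hl v hv
    rcases hs with rfl | rfl
    · exact mem_mu_succ hn d (fun i => v + (i : ZMod n)) j hj1 v (r v)
        (by simp) hw.symm
        (by
          intro i _
          left
          push_cast
          ring)
        (by
          intro i hij
          rcases Nat.eq_zero_or_pos i with h0 | h0
          · subst h0; simpa using hv
          · exact hmin i h0 hij)
        hm
        (by
          intro i hij
          obtain ⟨h1, h2, h3⟩ := gapF hr hl hv hmin i hij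
          exact H2 _ v h1 hv h2 h3)
    · exact mem_mu_succ hn d (fun i => v - (i : ZMod n)) j' hj1' v (l v)
        (by simp) hw'.symm
        (by
          intro i _
          right
          push_cast
          ring)
        (by
          intro i hij
          rcases Nat.eq_zero_or_pos i with h0 | h0
          · subst h0; simpa using hv
          · exact hmin' i h0 hij)
        hm'
        (by
          intro i hij
          obtain ⟨h1, h2, h3⟩ := gapB hr hl hv hmin' i hij
          exact H2 _ v h1 hv h2 h3)

include hr hl in
lemma stmt2 (hn : 3 ≤ n) :
    ∀ (d : ℕ) (u v : ZMod n), u ∉ Set.range g → v ∉ Set.range g →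
      r u = r v → l u = l v →
      mu (biRing n hn) g d u = mu (biRing n hn) g d v := by
  intro d
  induction d with
  | zero =>
    intro u v hu hv _ _
    show lab (biRing n hn) g u = lab (biRing n hn) g v
    unfold lab
    erw [Finset.filter_eq_empty_iff.2 (fun i _ h => hu ⟨i, h⟩),
      Finset.filter_eq_empty_iff.2 (fun i _ h => hv ⟨i, h⟩)]
  | succ d ihd =>
    intro u v hu hv hruv hluv
    have h1 := stmt1_of_stmt2 hr hl hn d ihd u hu
    have h2 := stmt1_of_stmt2 hr hl hn d ihd v hv
    have h3 : Mark.toSet (mu (biRing n hn) g (d + 1) u) =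
        Mark.toSet (mu (biRing n hn) g (d + 1) v) := by
      rw [h1, h2, ihd u v hu hv hruv hluv, hruv, hluv]
    exact h3

end Ring

/-- in the bi-directional ring of size `n ≥ 3`, with `r v` / `l v`
the first marked vertices clockwise / counter-clockwise from `v`, for `d ≥ 1`
(written `d + 1`) and unmarked `v`,
`μ_{d+1}(v) = { destutter [μ_d(v), μ_d(r v)], destutter [μ_d(v), μ_d(l v)] }`;
unmarked vertices with the same `r`- and `l`-values have equal markings at every
level; and the number of `∼_d`-classes is at most `2k`. -/
theorem stmt11 {k n : ℕ} (hk : 1 ≤ k) (hn : 3 ≤ n) (hkn : k ≤ n)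
    (g : Fin k → ZMod n) (hg : Function.Injective g)
    (r l : ZMod n → ZMod n)
    (hr : ∀ v : ZMod n, v ∉ Set.range g → firstMarkedFwd n g v (r v))
    (hl : ∀ v : ZMod n, v ∉ Set.range g → firstMarkedBwd n g v (l v)) :
    (∀ (d : ℕ) (v : ZMod n), v ∉ Set.range g →
      Mark.toSet (mu (biRing n hn) g (d + 1) v) =
        {dst [mu (biRing n hn) g d v, mu (biRing n hn) g d (r v)],
         dst [mu (biRing n hn) g d v, mu (biRing n hn) g d (l v)]}) ∧
    (∀ (d : ℕ) (u v : ZMod n), u ∉ Set.range g → v ∉ Set.range g →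
      r u = r v → l u = l v →
      mu (biRing n hn) g d u = mu (biRing n hn) g d v) ∧
    (∀ d : ℕ, (Set.range (mu (biRing n hn) g d)).ncard ≤ 2 * k) := by
  haveI : NeZero n := ⟨by omega⟩
  refine ⟨?_, stmt2 hr hl hn, ?_⟩
  · intro d v hv
    exact stmt1_of_stmt2 hr hl hn d (stmt2 hr hl hn d) v hv
  · intro d
    set U : Set (ZMod n) := {v | v ∉ Set.range g} with hU
    set μ := mu (biRing n hn) g d with hμ
    have hrangesub : Set.range μ ⊆ (μ '' Set.range g) ∪ (μ '' U) := by
      rintro m ⟨v, rfl⟩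
      by_cases hv : v ∈ Set.range g
      · exact Or.inl ⟨v, hv, rfl⟩
      · exact Or.inr ⟨v, hv, rfl⟩
    have hgk : (Set.range g).ncard ≤ k := by
      rw [← Set.image_univ]
      calc (g '' Set.univ).ncard ≤ (Set.univ : Set (Fin k)).ncard :=
            Set.ncard_image_le (Set.toFinite _)
        _ = k := by rw [Set.ncard_univ]; simp
    have hA : (μ '' Set.range g).ncard ≤ k :=
      le_trans (Set.ncard_image_le (Set.toFinite _)) hgk
    have hpick : ∀ v ∈ U, μ (Function.invFunOn r U (r v)) = μ v := by
      intro v hv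
      have hex : ∃ a ∈ U, r a = r v := ⟨v, hv, rfl⟩
      have hmem : Function.invFunOn r U (r v) ∈ U := Function.invFunOn_mem hex
      have heq : r (Function.invFunOn r U (r v)) = r v := Function.invFunOn_eq hex
      exact stmt2 hr hl hn d _ v hmem hv heq (r_det_l hr hl hmem hv heq)
    have hBsub : μ '' U ⊆ (fun w => μ (Function.invFunOn r U w)) '' (r '' U) := by
      rintro m ⟨v, hv, rfl⟩
      exact ⟨r v, ⟨v, hv, rfl⟩, hpick v hv⟩
    have hB : (μ '' U).ncard ≤ k := by
      have h1 : (μ '' U).ncard ≤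
          ((fun w => μ (Function.invFunOn r U w)) '' (r '' U)).ncard :=
        Set.ncard_le_ncard hBsub ((Set.toFinite _).image _)
      have h2 : ((fun w => μ (Function.invFunOn r U w)) '' (r '' U)).ncard ≤
          (r '' U).ncard := Set.ncard_image_le (Set.toFinite _)
      have h3 : (r '' U).ncard ≤ (Set.range g).ncard := by
        apply Set.ncard_le_ncard _ (Set.toFinite _)
        rintro w ⟨v, hv, rfl⟩
        obtain ⟨j, _, _, hm, _⟩ := hr v hv
        exact hm
      omega
    calc (Set.range μ).ncard ≤ ((μ '' Set.range g) ∪ (μ '' U)).ncard :=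
        Set.ncard_le_ncard hrangesub
          (((Set.toFinite _).image _).union ((Set.toFinite _).image _))
      _ ≤ (μ '' Set.range g).ncard + (μ '' U).ncard := Set.ncard_union_le _ _
      _ ≤ 2 * k := by omega
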